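/- On the complex plane ℂ with coordinates (s, φ), where s = r²/2 and φ is the angular coordinate, any continuous section flat along the leaves (i.e. of the local form a(s)·e^{isφ}) defined on an open disc U centered at the origin is identically zero. -/

import Mathlib

open Complex Real

lemma circleZero (σ : ℂ → ℂ) (s : ℝ) (hs : Irrational s)
    (hf : ∀ φ : ℝ, HasDerivAt (fun φ' : ℝ => σ ((Real.sqrt (2 * s) : ℂ) * Complex.exp (Complex.I * (φ' : ℂ))))
        (Complex.I * (s : ℂ) * σ ((Real.sqrt (2 * s) : ℂ) * Complex.exp (Complex.I * (φ : ℂ)))) φ) :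
    ∀ φ : ℝ, σ ((Real.sqrt (2 * s) : ℂ) * Complex.exp (Complex.I * (φ : ℂ))) = 0 := by
  set f : ℝ → ℂ := fun φ : ℝ => σ ((Real.sqrt (2 * s) : ℂ) * Complex.exp (Complex.I * (φ : ℂ))) with hfdef
  set g : ℝ → ℂ := fun φ : ℝ => f φ * Complex.exp (-(Complex.I * (s:ℂ) * (φ:ℂ))) with hgdef
  have hc : ∀ φ : ℝ, HasDerivAt (fun φ' : ℝ => -(Complex.I * (s:ℂ) * (φ':ℂ))) (-(Complex.I * (s:ℂ))) φ := by
    intro φ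
    simpa [Pi.neg_def] using (((hasDerivAt_id φ).ofReal_comp).const_mul (Complex.I * (s:ℂ))).neg
  have hg : ∀ φ : ℝ, HasDerivAt g 0 φ := by
    intro φ
    have h := (hf φ).mul (hc φ).cexp
    convert h using 1
    · rfl
    · rfl
    · ring
  have hconst : ∀ φ : ℝ, g φ = g 0 :=
    fun φ => is_const_of_deriv_eq_zero (fun x => (hg x).differentiableAt)
      (fun x => (hg x).deriv) φ 0
  have hper : f (2 * π) = f 0 := by
    simp only [hfdef]
    congr 1
    push_cast
    rw [mul_comm Complex.I]
    rw [Complex.exp_two_pi_mul_I]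
    simp
  have h2 := hconst (2 * π)
  simp only [hgdef, hper] at h2
  -- h2 : f 0 * exp (-(I*s*(2π))) = f 0 * exp (-(I*s*0))
  have hne : Complex.exp (-(Complex.I * (s:ℂ) * ((2 * π : ℝ):ℂ))) ≠ 1 := by
    simp only [ne_eq, Complex.exp_eq_one_iff, not_exists]
    intro n hn
    apply hs.ne_int (-n)
    have hπ : (π:ℂ) ≠ 0 := Complex.ofReal_ne_zero.mpr Real.pi_ne_zero
    have : (s:ℂ) = ((-n : ℤ):ℂ) := by
      push_cast at hn ⊢
      have hI : Complex.I ≠ 0 := Complex.I_ne_zero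
      -- hn : -(I * s * (2*π)) = n * (2*π*I)
      have key : Complex.I * (π:ℂ) * (s:ℂ) = Complex.I * (π:ℂ) * ((-n:ℤ):ℂ) := by
        push_cast
        linear_combination -hn / 2
      exact_mod_cast mul_left_cancel₀ (mul_ne_zero hI hπ) key
    exact_mod_cast this
  have hf0 : f 0 = 0 := by
    by_contra h0
    apply hne
    have := mul_left_cancel₀ h0 h2
    simpa using this
  intro φ
  have := hconst φ
  simp only [hgdef, hf0, zero_mul] at this
  have hexpne : Complex.exp (-(Complex.I * (s:ℂ) * (φ:ℂ))) ≠ 0 := Complex.exp_ne_zero _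
  exact (mul_eq_zero.mp this).resolve_right hexpne



/-- On ℂ with coordinates (s,φ), s = r²/2, any continuous section
flat along the leaves (circles of constant s) on an open disc U around the
origin is identically zero.  Flatness along the leaf of radius √(2s) is the
ODE ∂σ/∂φ = i·s·σ along the circle. -/
theorem statement12 (r : ℝ) (hr : 0 < r) (σ : ℂ → ℂ)
    (hσ : ContinuousOn σ (Metric.ball (0 : ℂ) r))
    (hflat : ∀ s : ℝ, 0 < s → Real.sqrt (2 * s) < r → ∀ φ : ℝ,
      HasDerivAt (fun φ' : ℝ => σ ((Real.sqrt (2 * s) : ℂ) * Complex.exp (Complex.I * (φ' : ℂ))))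
        (Complex.I * (s : ℂ) * σ ((Real.sqrt (2 * s) : ℂ) * Complex.exp (Complex.I * (φ : ℂ)))) φ) :
    ∀ z ∈ Metric.ball (0 : ℂ) r, σ z = 0 := by
  intro z hz
  set t := ‖z‖ with ht
  have htr : t < r := by
    simpa [ht] using mem_ball_zero_iff.mp hz
  have ht0 : 0 ≤ t := norm_nonneg z
  have hkey : t^2/2 < r^2/2 := by nlinarith
  have hex : ∀ n : ℕ, ∃ x : ℝ, Irrational x ∧ t^2/2 < x ∧
      x < min (r^2/2) (t^2/2 + 1/(n+1)) := by
    intro n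
    apply exists_irrational_btwn
    have h1 : (0:ℝ) < 1/((n:ℝ)+1) := by positivity
    rw [lt_min_iff]
    exact ⟨hkey, by linarith⟩
  choose u hu1 hu2 hu3 using hex
  have hu0 : ∀ n, 0 < u n := fun n => lt_of_le_of_lt (div_nonneg (sq_nonneg t) two_pos.le) (hu2 n)
  have hur : ∀ n, Real.sqrt (2 * u n) < r := by
    intro n
    have h1 : u n < r^2/2 := lt_of_lt_of_le (hu3 n) (min_le_left _ _)
    have h2 : 2 * u n < r^2 := by linarith
    calc Real.sqrt (2 * u n) < Real.sqrt (r^2) :=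
          Real.sqrt_lt_sqrt (by linarith [hu0 n]) h2
      _ = r := Real.sqrt_sq hr.le
  have hzero : ∀ n, σ ((Real.sqrt (2 * u n) : ℂ) *
      Complex.exp (Complex.I * (Complex.arg z : ℂ))) = 0 :=
    fun n => circleZero σ (u n) (hu1 n) (hflat (u n) (hu0 n) (hur n)) (Complex.arg z)
  have hupper : Filter.Tendsto (fun n : ℕ => t^2/2 + 1/((n:ℝ)+1)) Filter.atTop (nhds (t^2/2)) := by
    have := (tendsto_const_nhds (x := t^2/2)).add tendsto_one_div_add_atTop_nhds_zero_nat
    rw [add_zero] at this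
    exact this
  have hu_lim : Filter.Tendsto u Filter.atTop (nhds (t^2/2)) := by
    refine tendsto_of_tendsto_of_tendsto_of_le_of_le tendsto_const_nhds hupper
      (fun n => (hu2 n).le) (fun n => ?_)
    exact (lt_of_lt_of_le (hu3 n) (min_le_right _ _)).le
  have hρ : Filter.Tendsto (fun n => Real.sqrt (2 * u n)) Filter.atTop (nhds t) := by
    have h1 : Filter.Tendsto (fun n => 2 * u n) Filter.atTop (nhds (t^2)) := by
      have := hu_lim.const_mul 2
      convert this using 2
      ring
    have h2 := (Real.continuous_sqrt.tendsto (t^2)).comp h1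
    rw [Real.sqrt_sq ht0] at h2
    exact h2
  have hzn : Filter.Tendsto (fun n => ((Real.sqrt (2 * u n) : ℝ) : ℂ) *
      Complex.exp (Complex.I * (Complex.arg z : ℂ))) Filter.atTop (nhds z) := by
    have h1 := (Complex.continuous_ofReal.tendsto t).comp hρ
    have h2 := h1.mul_const (Complex.exp (Complex.I * (Complex.arg z : ℂ)))
    have h3 : (t : ℂ) * Complex.exp (Complex.I * (Complex.arg z : ℂ)) = z := by
      rw [mul_comm Complex.I]
      exact Complex.norm_mul_exp_arg_mul_I z
    rw [h3] at h2
    exact h2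
  have hca : ContinuousAt σ z := hσ.continuousAt (Metric.isOpen_ball.mem_nhds hz)
  have hfin := hca.tendsto.comp hzn
  simp only [Function.comp_def, hzero] at hfin
  exact (tendsto_nhds_unique hfin tendsto_const_nhds)
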